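/- Purification preserves privacy: let M' : Y → Z with Z finite, and suppose there exists an ε-differentially private M : Y → Z such that the total variation distance between M(y) and M'(y) is at most δ for all y, where δ ≤ (e^ε - 1)/(e^ε + 1) · γ/(1 - γ) · 1/|Z| for some γ ∈ (0,1). Then the algorithm that outputs M'(y) with probability 1 - γ and a uniform element of Z with probability γ is ε-differentially private. -/
import Mathlib

/-- If two probability vectors are within TV distance `δ`, then on any event the
probabilities differ by at most `δ`. -/
lemma tv_event_bound {Z : Type*} [Fintype Z] (f g : Z → ℝ) (δ : ℝ)
    (hsf : ∑ z, f z = 1) (hsg : ∑ z, g z = 1)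
    (hTV : (1 / 2) * ∑ z, |f z - g z| ≤ δ) (E : Finset Z) :
    ∑ z ∈ E, f z ≤ ∑ z ∈ E, g z + δ := by
  have h1 : ∑ z ∈ E, (f z - g z) ≤ ∑ z, (|f z - g z| + (f z - g z)) / 2 := by
    calc ∑ z ∈ E, (f z - g z) ≤ ∑ z ∈ E, (|f z - g z| + (f z - g z)) / 2 := by
          apply Finset.sum_le_sum; intro z _
          have := le_abs_self (f z - g z); linarith
      _ ≤ ∑ z, (|f z - g z| + (f z - g z)) / 2 := by
          apply Finset.sum_le_sum_of_subset_of_nonneg (Finset.subset_univ E)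
          intro z _ _
          have := neg_abs_le (f z - g z); linarith
  have h2 : ∑ z, (|f z - g z| + (f z - g z)) / 2
      = (1 / 2) * ∑ z, |f z - g z| + (1 / 2) * (∑ z, f z - ∑ z, g z) := by
    rw [← Finset.sum_sub_distrib, Finset.mul_sum, Finset.mul_sum, ← Finset.sum_add_distrib]
    apply Finset.sum_congr rfl; intro z _; ring
  have h3 : ∑ z ∈ E, (f z - g z) ≤ δ := by
    rw [h2, hsf, hsg] at h1; linarith
  rw [Finset.sum_sub_distrib] at h3; linarith

/-- Purification preserves privacy: if `M` is `ε`-DP and `M'` is within total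
variation distance `δ ≤ (e^ε-1)/(e^ε+1) · γ/(1-γ) · 1/|Z|` of `M` on every input,
then outputting `M'(y)` with probability `1-γ` and a uniform element of `Z` with
probability `γ` is `ε`-DP. -/
theorem purification_preserves_privacy {Y Z : Type*} [Fintype Z] [Nonempty Z]
    (Neighbor : Y → Y → Prop)
    (M M' : Y → Z → ℝ) (ε δ γ : ℝ) (hε : 0 < ε) (hγ : γ ∈ Set.Ioo (0 : ℝ) 1)
    (hM_nonneg : ∀ y z, 0 ≤ M y z) (hM_sum : ∀ y, ∑ z, M y z = 1)
    (hM'_nonneg : ∀ y z, 0 ≤ M' y z) (hM'_sum : ∀ y, ∑ z, M' y z = 1)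
    (hDP : ∀ y y', Neighbor y y' → ∀ E : Finset Z,
      ∑ z ∈ E, M y z ≤ Real.exp ε * ∑ z ∈ E, M y' z)
    (hTV : ∀ y, (1 / 2) * ∑ z, |M y z - M' y z| ≤ δ)
    (hδ : δ ≤ (Real.exp ε - 1) / (Real.exp ε + 1) * (γ / (1 - γ)) * (1 / Fintype.card Z)) :
    ∀ y y', Neighbor y y' → ∀ E : Finset Z,
      ∑ z ∈ E, ((1 - γ) * M' y z + γ / Fintype.card Z)
        ≤ Real.exp ε * ∑ z ∈ E, ((1 - γ) * M' y' z + γ / Fintype.card Z) := by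
  intro y y' hN E
  obtain ⟨hγ0, hγ1⟩ := hγ
  have hn : (0 : ℝ) < (Fintype.card Z : ℝ) := by exact_mod_cast Fintype.card_pos
  have he : (1 : ℝ) < Real.exp ε := by
    nlinarith [Real.add_one_le_exp ε]
  have hδ0 : 0 ≤ δ := by
    have h := hTV y
    have : 0 ≤ (1 / 2) * ∑ z, |M y z - M' y z| := by positivity
    linarith
  -- event-level TV bounds
  have hA : ∑ z ∈ E, M' y z ≤ ∑ z ∈ E, M y z + δ := by
    apply tv_event_bound _ _ δ (hM'_sum y) (hM_sum y) _ E
    have h := hTV y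
    calc (1/2) * ∑ z, |M' y z - M y z| = (1/2) * ∑ z, |M y z - M' y z| := by
          congr 1; apply Finset.sum_congr rfl; intro z _; exact abs_sub_comm _ _
      _ ≤ δ := h
  have hB : ∑ z ∈ E, M y' z ≤ ∑ z ∈ E, M' y' z + δ :=
    tv_event_bound _ _ δ (hM_sum y') (hM'_sum y') (hTV y') E
  have hDP' := hDP y y' hN E
  -- rewrite sums
  rw [Finset.sum_add_distrib, Finset.sum_add_distrib, ← Finset.mul_sum, ← Finset.mul_sum,
    Finset.sum_const, nsmul_eq_mul]
  set n : ℝ := (Fintype.card Z : ℝ)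
  set k : ℝ := (E.card : ℝ)
  set u : ℝ := γ / n with hu
  have hun : u * n = γ := by
    rw [hu]; exact div_mul_cancel₀ γ hn.ne'
  have hδ' : δ * ((Real.exp ε + 1) * (1 - γ)) * n ≤ (Real.exp ε - 1) * γ := by
    have hrw : (Real.exp ε - 1) / (Real.exp ε + 1) * (γ / (1 - γ)) * (1 / n)
        = ((Real.exp ε - 1) * γ) / ((Real.exp ε + 1) * (1 - γ) * n) := by
      field_simp
    rw [hrw, le_div_iff₀ (mul_pos (mul_pos (by linarith : (0:ℝ) < Real.exp ε + 1) (by linarith : (0:ℝ) < 1 - γ)) hn)] at hδ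
    nlinarith [hδ]
  have hδu : δ * ((Real.exp ε + 1) * (1 - γ)) ≤ (Real.exp ε - 1) * u := by
    have hkey : δ * ((Real.exp ε + 1) * (1 - γ)) * n ≤ (Real.exp ε - 1) * u * n := by
      nlinarith [hδ', hun]
    exact le_of_mul_le_mul_right hkey hn
  rcases Finset.eq_empty_or_nonempty E with rfl | hEne
  · have hk : k = 0 := by simp [k]
    rw [hk]; simp
  · have hk1 : (1 : ℝ) ≤ k := by
      simp only [k]
      exact_mod_cast Finset.card_pos.mpr hEne
    have hu0 : 0 ≤ u := by rw [hu]; exact le_of_lt (div_pos hγ0 hn)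
    have hs' : 0 ≤ ∑ z ∈ E, M' y' z := Finset.sum_nonneg fun z _ => hM'_nonneg y' z
    nlinarith [mul_le_mul_of_nonneg_left hA (by linarith : (0:ℝ) ≤ 1 - γ),
      mul_le_mul_of_nonneg_left hDP' (by linarith : (0:ℝ) ≤ 1 - γ),
      mul_le_mul_of_nonneg_left hB (mul_nonneg (by linarith : (0:ℝ) ≤ 1 - γ) (Real.exp_pos ε).le),
      mul_le_mul_of_nonneg_left hδu (by linarith : (0:ℝ) ≤ k - 1 + 1),
      mul_nonneg (mul_nonneg (by linarith : (0:ℝ) ≤ k - 1) hu0) (by linarith : (0:ℝ) ≤ Real.exp ε - 1)]
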